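/- Let α, β, θ > 0, let λ ∈ [−1,1] with λ ≠ 0, and let p ∈ (0,1). Set A = ((1+λ) − sqrt((1+λ)² − 4pλ))/(2λ) and Q(p) = (log(1 − (1/β)·log(1 − A^{1/θ})))^{1/α}. Then Q(p) > 0 and F(Q(p)) = p, where F is the CDF of the generalized transmuted Weibull extension distribution. -/

import Mathlib

set_option maxHeartbeats 1000000


open Real

/-- The p-th quantile of the generalized transmuted Weibull extension (GTWE)
distribution: with `A = ((1+λ) − √((1+λ)² − 4pλ))/(2λ)` and
`Q = (log(1 − (1/β)·log(1 − A^{1/θ})))^{1/α}`, we have `Q > 0` and `F(Q) = p`,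
where `F(x) = (1+λ)(1 − e^{−β(e^{x^α}−1)})^θ − λ(1 − e^{−β(e^{x^α}−1)})^{2θ}`. -/
theorem gtwe_quantile (α β θ lam p A Q : ℝ)
    (hα : 0 < α) (hβ : 0 < β) (hθ : 0 < θ)
    (hlam : lam ∈ Set.Icc (-1 : ℝ) 1) (hlam0 : lam ≠ 0)
    (hp : p ∈ Set.Ioo (0 : ℝ) 1)
    (hA : A = ((1 + lam) - Real.sqrt ((1 + lam) ^ 2 - 4 * p * lam)) / (2 * lam))
    (hQ : Q = (Real.log (1 - (1 / β) * Real.log (1 - A ^ (1 / θ)))) ^ (1 / α)) :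
    0 < Q ∧
      (1 + lam) * (1 - Real.exp (-β * (Real.exp (Q ^ α) - 1))) ^ θ
        - lam * (1 - Real.exp (-β * (Real.exp (Q ^ α) - 1))) ^ (2 * θ) = p := by
  obtain ⟨hl1, hl2⟩ := hlam
  obtain ⟨hp0, hp1⟩ := hp
  set s := Real.sqrt ((1 + lam) ^ 2 - 4 * p * lam) with hsdef
  have hdisc : 0 ≤ (1 + lam) ^ 2 - 4 * p * lam := by
    rcases lt_or_gt_of_ne hlam0 with h | h
    · nlinarith
    · nlinarith
  have hs0 : 0 ≤ s := Real.sqrt_nonneg _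
  have hs2 : s ^ 2 = (1 + lam) ^ 2 - 4 * p * lam := Real.sq_sqrt hdisc
  -- 0 < A < 1
  have hA0 : 0 < A := by
    rw [hA]
    rcases lt_or_gt_of_ne hlam0 with h | h
    · -- lam < 0 : need (1+lam) - s < 0, since s^2 - (1+lam)^2 = -4 p lam > 0
      apply div_pos_of_neg_of_neg
      · nlinarith
      · linarith
    · -- lam > 0 : s < 1 + lam
      apply div_pos
      · nlinarith
      · linarith
  have hA1 : A < 1 := by
    rw [hA]
    rcases lt_or_gt_of_ne hlam0 with h | h
    · rw [div_lt_one_iff]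
      right; right
      constructor
      · linarith
      · nlinarith
    · rw [div_lt_one (by linarith)]
      nlinarith
  have hquad : (1 + lam) * A - lam * A ^ 2 = p := by
    have h2l : (2 * lam) ≠ 0 := by
      simpa using hlam0
    rw [hA]
    field_simp
    nlinarith [hs2]
  -- u = A^{1/θ}
  set u := A ^ (1 / θ) with hu
  have hu0 : 0 < u := Real.rpow_pos_of_pos hA0 _
  have hu1 : u < 1 := Real.rpow_lt_one hA0.le hA1 (by positivity)
  have huθ : u ^ θ = A := by
    rw [hu, ← Real.rpow_mul hA0.le, one_div_mul_cancel hθ.ne', Real.rpow_one]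
  have hu2θ : u ^ (2 * θ) = A ^ 2 := by
    rw [two_mul, Real.rpow_add hu0, huθ, sq]
  have hlog : Real.log (1 - u) < 0 :=
    Real.log_neg (by linarith) (by linarith)
  set L := 1 - (1 / β) * Real.log (1 - u) with hL
  have hL1 : 1 < L := by
    have : 0 < (1 / β) * (- Real.log (1 - u)) := by
      apply mul_pos (by positivity); linarith
    rw [hL]; nlinarith
  have hlogL : 0 < Real.log L := Real.log_pos hL1
  have hQpos : 0 < Q := by
    rw [hQ]
    exact Real.rpow_pos_of_pos hlogL _
  have hQα : Q ^ α = Real.log L := by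
    rw [hQ, ← Real.rpow_mul hlogL.le, one_div_mul_cancel hα.ne', Real.rpow_one]
  have hexp : Real.exp (Q ^ α) = L := by
    rw [hQα, Real.exp_log (by linarith)]
  have harg : -β * (Real.exp (Q ^ α) - 1) = Real.log (1 - u) := by
    rw [hexp, hL]
    field_simp
    ring
  have hbase : 1 - Real.exp (-β * (Real.exp (Q ^ α) - 1)) = u := by
    rw [harg, Real.exp_log (by linarith)]
    ring
  refine ⟨hQpos, ?_⟩
  rw [hbase, huθ, hu2θ]
  nlinarith [hquad]
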